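/- Let a ∈ (0,2) with a ≠ 1 and let λ > 0, μ > 0. Then the function x ↦ (exp(−λx²/2)·(−((λ−μ)/2)·x² − 1) + exp(−μx²/2))·x^(−a−1) is integrable on (0,∞) and ∫₀^∞ (exp(−λx²/2)·(−((λ−μ)/2)·x² − 1) + exp(−μx²/2))·x^(−a−1) dx = 2^{−1−a/2}·Γ(−a/2)·( (a/2 − 1)·λ^{a/2} − (a/2)·μ·λ^{a/2−1} + μ^{a/2} ). -/

import Mathlib

open MeasureTheory Real Set Filter

lemma rdts_abs_exp_neg_sub_one_le {t : ℝ} (ht : 0 ≤ t) : |Real.exp (-t) - 1| ≤ t := by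
  have h1 : Real.exp (-t) ≤ 1 := Real.exp_le_one_iff.mpr (by linarith)
  have h2 : 1 - t ≤ Real.exp (-t) := by
    have := Real.add_one_le_exp (-t); linarith
  rw [abs_sub_comm, abs_of_nonneg (by linarith)]
  linarith

lemma rdts_contOn {f : ℝ → ℝ} (hf : Continuous f) (c : ℝ) {S : Set ℝ} (hS : S ⊆ Ioi 0) :
    ContinuousOn (fun t => f t * t ^ c) S := fun t ht =>
  (hf.continuousAt.mul
    (Real.continuousAt_rpow_const t c (Or.inl (ne_of_gt (hS ht))))).continuousWithinAt

lemma rdts_integrableOn_mul_rpow {f : ℝ → ℝ} (hf : Continuous f) {c k C : ℝ}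
    (h0 : ∀ t ∈ Ioc (0:ℝ) 1, |f t| ≤ C * t ^ k)
    (hinf : ∀ t ∈ Ioi (1:ℝ), |f t| ≤ C)
    (hkc : -1 < k + c) (hc : c < -1) :
    IntegrableOn (fun t => f t * t ^ c) (Ioi 0) := by
  rw [← Ioc_union_Ioi_eq_Ioi (zero_le_one (α := ℝ))]
  apply IntegrableOn.union
  · apply Integrable.mono' (g := fun t => C * t ^ (k + c))
    · exact ((intervalIntegral.intervalIntegrable_rpow' (a := 0) (b := 1) hkc).1.const_mul C)
    · exact (rdts_contOn hf c Ioc_subset_Ioi_self).aestronglyMeasurable measurableSet_Ioc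
    · refine (ae_restrict_iff' measurableSet_Ioc).2 (Eventually.of_forall fun t ht => ?_)
      have ht0 : 0 < t := ht.1
      have : |f t * t ^ c| = |f t| * t ^ c := by
        rw [abs_mul, abs_of_nonneg (Real.rpow_nonneg ht0.le c)]
      rw [Real.norm_eq_abs, this, Real.rpow_add ht0, ← mul_assoc]
      exact mul_le_mul_of_nonneg_right (h0 t ht) (Real.rpow_nonneg ht0.le c)
  · apply Integrable.mono' (g := fun t => C * t ^ c)
    · exact (integrableOn_Ioi_rpow_of_lt hc one_pos).const_mul C
    · exact (rdts_contOn hf c (Ioi_subset_Ioi zero_le_one)).aestronglyMeasurable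
        measurableSet_Ioi
    · refine (ae_restrict_iff' measurableSet_Ioi).2 (Eventually.of_forall fun t ht => ?_)
      have ht0 : (0:ℝ) < t := lt_trans one_pos ht
      have : |f t * t ^ c| = |f t| * t ^ c := by
        rw [abs_mul, abs_of_nonneg (Real.rpow_nonneg ht0.le c)]
      rw [Real.norm_eq_abs, this]
      exact mul_le_mul_of_nonneg_right (hinf t ht) (Real.rpow_nonneg ht0.le c)

lemma rdts_integrable_t (s : ℝ) (hs0 : 0 < s) (hs1 : s < 1) :
    IntegrableOn (fun t : ℝ => (Real.exp (-t) - 1) * t ^ (-s - 1)) (Ioi 0) := by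
  apply rdts_integrableOn_mul_rpow (k := 1) (C := 1)
    ((Real.continuous_exp.comp continuous_neg).sub continuous_const)
  · intro t ht
    rw [one_mul, Real.rpow_one]
    exact rdts_abs_exp_neg_sub_one_le ht.1.le
  · intro t ht
    simp only [Pi.sub_apply, Function.comp_apply]
    have h1 : Real.exp (-t) ≤ 1 := Real.exp_le_one_iff.mpr (by linarith [lt_trans one_pos (mem_Ioi.mp ht)])
    have h2 : 0 < Real.exp (-t) := Real.exp_pos _
    rw [abs_sub_comm, abs_of_nonneg (by linarith)]
    linarith
  · linarith
  · linarith

lemma rdts_val_t (s : ℝ) (hs0 : 0 < s) (hs1 : s < 1) :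
    ∫ t in Ioi (0:ℝ), (Real.exp (-t) - 1) * t ^ (-s - 1) = Real.Gamma (-s) := by
  have hs : s ≠ 0 := ne_of_gt hs0
  set G : ℝ → ℝ := fun t => (Real.exp (-t) - 1) * t ^ (-s) / (-s) with hG
  set G' : ℝ → ℝ := fun t =>
    (Real.exp (-t) - 1) * t ^ (-s - 1) + Real.exp (-t) * t ^ (-s) / s with hG'
  have hderiv : ∀ t ∈ Ioi (0:ℝ), HasDerivAt G (G' t) t := by
    intro t ht
    have h1 : HasDerivAt (fun t : ℝ => Real.exp (-t) - 1) (-Real.exp (-t)) t := by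
      simpa using ((Real.hasDerivAt_exp (-t)).comp t (hasDerivAt_neg t)).sub_const 1
    have h2 : HasDerivAt (fun t : ℝ => t ^ (-s)) (-s * t ^ (-s - 1)) t :=
      Real.hasDerivAt_rpow_const (Or.inl (ne_of_gt ht))
    have h3 := (h1.mul h2).div_const (-s)
    refine h3.congr_deriv ?_
    symm
    rw [hG', eq_div_iff (neg_ne_zero.mpr hs)]
    field_simp
    ring
  -- integrability of the exp * rpow part
  have hhint : IntegrableOn (fun t : ℝ => Real.exp (-t) * t ^ (-s) / s) (Ioi 0) := by
    have := (Real.GammaIntegral_convergent (s := 1 - s) (by linarith)).div_const s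
    simpa [show (1:ℝ) - s - 1 = -s by ring, IntegrableOn] using this
  have hgint := rdts_integrable_t s hs0 hs1
  have hGint : IntegrableOn G' (Ioi 0) := hgint.add hhint
  -- limits of G
  have hG0 : Tendsto G (nhdsWithin 0 (Ioi 0)) (nhds 0) := by
    apply squeeze_zero_norm' (a := fun t => t ^ (1 - s) / s)
    · filter_upwards [self_mem_nhdsWithin] with t (ht : (0:ℝ) < t)
      have hb : |Real.exp (-t) - 1| ≤ t := rdts_abs_exp_neg_sub_one_le ht.le
      have : ‖G t‖ = |Real.exp (-t) - 1| * t ^ (-s) / s := by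
        rw [Real.norm_eq_abs, hG]
        rw [abs_div, abs_mul, abs_of_nonneg (Real.rpow_nonneg ht.le _), abs_neg,
          abs_of_pos hs0]
      rw [this]
      have : t * t ^ (-s) = t ^ (1 - s) := by
        rw [show (1:ℝ) - s = 1 + (-s) by ring, Real.rpow_add ht, Real.rpow_one]
      rw [← this]
      exact div_le_div_of_nonneg_right
        (mul_le_mul_of_nonneg_right hb (Real.rpow_nonneg ht.le _)) hs0.le
    · have h1 : Tendsto (fun t : ℝ => t ^ (1 - s)) (nhdsWithin 0 (Ioi 0)) (nhds 0) := by
        have hc := (Real.continuousAt_rpow_const 0 (1 - s) (Or.inr (by linarith))).tendsto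
        rw [Real.zero_rpow (by linarith : (1:ℝ) - s ≠ 0)] at hc
        exact hc.mono_left nhdsWithin_le_nhds
      simpa using h1.div_const s
  have hGtop : Tendsto G atTop (nhds 0) := by
    apply squeeze_zero_norm' (a := fun t => t ^ (-s) / s)
    · filter_upwards [Ioi_mem_atTop (0:ℝ)] with t (ht : (0:ℝ) < t)
      have h1 : Real.exp (-t) ≤ 1 := Real.exp_le_one_iff.mpr (by linarith)
      have h2 : (0:ℝ) < Real.exp (-t) := Real.exp_pos _
      have hb : |Real.exp (-t) - 1| ≤ 1 := by
        rw [abs_sub_comm, abs_of_nonneg (by linarith)]; linarith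
      have : ‖G t‖ = |Real.exp (-t) - 1| * t ^ (-s) / s := by
        rw [Real.norm_eq_abs, hG]
        rw [abs_div, abs_mul, abs_of_nonneg (Real.rpow_nonneg ht.le _), abs_neg,
          abs_of_pos hs0]
      rw [this]
      exact div_le_div_of_nonneg_right
        (by simpa using mul_le_mul_of_nonneg_right hb (Real.rpow_nonneg ht.le (-s))) hs0.le
    · simpa using (tendsto_rpow_neg_atTop hs0).div_const s
  -- FTC on the two pieces
  have hsub1 : Ioc (0:ℝ) 1 ⊆ Ioi 0 := Ioc_subset_Ioi_self
  have hsub2 : Ioi (1:ℝ) ⊆ Ioi 0 := Ioi_subset_Ioi zero_le_one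
  have h1 : ∫ t in Ioi (1:ℝ), G' t = 0 - G 1 :=
    integral_Ioi_of_hasDerivAt_of_tendsto'
      (fun t ht => hderiv t (mem_Ioi.mpr (lt_of_lt_of_le one_pos (mem_Ici.mp ht))))
      (hGint.mono_set hsub2) hGtop
  have h2 : ∫ t in (0:ℝ)..1, G' t = G 1 - 0 := by
    refine intervalIntegral.integral_eq_sub_of_hasDerivAt_of_tendsto one_pos
      (fun t ht => hderiv t ht.1)
      ((intervalIntegrable_iff_integrableOn_Ioc_of_le zero_le_one).2 (hGint.mono_set hsub1))
      hG0 ?_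
    exact ((hderiv 1 (mem_Ioi.mpr one_pos)).continuousAt.continuousWithinAt)
  have hsplit : ∫ t in Ioi (0:ℝ), G' t = (∫ t in Ioc (0:ℝ) 1, G' t) + ∫ t in Ioi (1:ℝ), G' t := by
    rw [← setIntegral_union (Ioc_disjoint_Ioi le_rfl) measurableSet_Ioi
      (hGint.mono_set hsub1) (hGint.mono_set hsub2), Ioc_union_Ioi_eq_Ioi zero_le_one]
  have hG'zero : ∫ t in Ioi (0:ℝ), G' t = 0 := by
    rw [hsplit, ← intervalIntegral.integral_of_le zero_le_one, h1, h2]; ring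
  -- Gamma value of the extra term
  have hGamma : ∫ t in Ioi (0:ℝ), Real.exp (-t) * t ^ (-s) / s = Real.Gamma (1 - s) / s := by
    have h := Real.Gamma_eq_integral (show (0:ℝ) < 1 - s by linarith)
    rw [show (1:ℝ) - s - 1 = -s by ring] at h
    rw [integral_div, ← h]
  have key : ∫ t in Ioi (0:ℝ), (Real.exp (-t) - 1) * t ^ (-s - 1)
      = -(Real.Gamma (1 - s) / s) := by
    have : ∀ t : ℝ, (Real.exp (-t) - 1) * t ^ (-s - 1)
        = G' t - Real.exp (-t) * t ^ (-s) / s := by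
      intro t; simp only [hG']; ring
    simp_rw [this]
    rw [integral_sub hGint hhint, hG'zero, hGamma, zero_sub]
  rw [key]
  have hg1 : Real.Gamma (-s + 1) = -s * Real.Gamma (-s) :=
    Real.Gamma_add_one (by simpa using hs)
  rw [show (1:ℝ) - s = -s + 1 by ring, hg1]
  field_simp

lemma rdts_val_scaled (s c : ℝ) (hs0 : 0 < s) (hs1 : s < 1) (hc : 0 < c) :
    ∫ t in Ioi (0:ℝ), (Real.exp (-(c * t)) - 1) * t ^ (-s - 1)
      = c ^ s * Real.Gamma (-s) := by
  have hc' : c ≠ 0 := ne_of_gt hc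
  have step1 : ∫ t in Ioi (0:ℝ), (Real.exp (-(c * t)) - 1) * t ^ (-s - 1)
      = ∫ t in Ioi (0:ℝ), c ^ (s + 1) * ((Real.exp (-(c * t)) - 1) * (c * t) ^ (-s - 1)) := by
    refine setIntegral_congr_fun measurableSet_Ioi (fun t ht => ?_)
    have ht0 : (0:ℝ) < t := ht
    rw [Real.mul_rpow hc.le ht0.le]
    rw [show c ^ (s + 1) * ((Real.exp (-(c * t)) - 1) * (c ^ (-s - 1) * t ^ (-s - 1)))
      = (c ^ (s + 1) * c ^ (-s - 1)) * ((Real.exp (-(c * t)) - 1) * t ^ (-s - 1)) by ring]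
    rw [← Real.rpow_add hc, show s + 1 + (-s - 1) = 0 by ring, Real.rpow_zero, one_mul]
  rw [step1, integral_const_mul,
    integral_comp_mul_left_Ioi (fun u => (Real.exp (-u) - 1) * u ^ (-s - 1)) 0 hc,
    mul_zero, rdts_val_t s hs0 hs1, smul_eq_mul, ← mul_assoc]
  congr 1
  rw [show c ^ (s + 1) = c ^ s * c by rw [Real.rpow_add hc, Real.rpow_one]]
  field_simp

lemma rdts_integrable_x (a b : ℝ) (ha0 : 0 < a) (ha2 : a < 2) (hb : 0 < b) :
    IntegrableOn (fun x : ℝ => (Real.exp (-(b * x ^ 2 / 2)) - 1) * x ^ (-a - 1)) (Ioi 0) := by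
  apply rdts_integrableOn_mul_rpow (k := (2:ℝ)) (C := max (b / 2) 1) (by continuity)
  · intro t ht
    have ht0 : (0:ℝ) < t := ht.1
    have hsq : t ^ (2:ℝ) = t ^ 2 := by
      rw [show (2:ℝ) = ((2:ℕ):ℝ) by norm_num, Real.rpow_natCast]
    have h1 : |Real.exp (-(b * t ^ 2 / 2)) - 1| ≤ b * t ^ 2 / 2 :=
      rdts_abs_exp_neg_sub_one_le (by positivity)
    have h2 : b * t ^ 2 / 2 = (b / 2) * t ^ (2:ℝ) := by rw [hsq]; ring
    calc |Real.exp (-(b * t ^ 2 / 2)) - 1| ≤ (b / 2) * t ^ (2:ℝ) := by rw [← h2]; exact h1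
      _ ≤ max (b / 2) 1 * t ^ (2:ℝ) :=
        mul_le_mul_of_nonneg_right (le_max_left _ _) (Real.rpow_nonneg ht0.le _)
  · intro t ht
    have h1 : Real.exp (-(b * t ^ 2 / 2)) ≤ 1 := Real.exp_le_one_iff.mpr (by nlinarith [lt_trans one_pos (mem_Ioi.mp ht)])
    have h2 : (0:ℝ) < Real.exp (-(b * t ^ 2 / 2)) := Real.exp_pos _
    rw [abs_sub_comm, abs_of_nonneg (by linarith)]
    have : (1:ℝ) ≤ max (b / 2) 1 := le_max_right _ _
    linarith
  · linarith
  · linarith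

lemma rdts_val_x (a b : ℝ) (ha0 : 0 < a) (ha2 : a < 2) (hb : 0 < b) :
    ∫ x in Ioi (0:ℝ), (Real.exp (-(b * x ^ 2 / 2)) - 1) * x ^ (-a - 1)
      = (2:ℝ) ^ (-1 - a / 2) * b ^ (a / 2) * Real.Gamma (-(a / 2)) := by
  have hs0 : 0 < a / 2 := by linarith
  have hs1 : a / 2 < 1 := by linarith
  have key := integral_comp_rpow_Ioi
    (fun t => (Real.exp (-(b / 2 * t)) - 1) * t ^ (-(a / 2) - 1)) (two_ne_zero (α := ℝ))
  rw [rdts_val_scaled (a / 2) (b / 2) hs0 hs1 (by positivity)] at key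
  have step1 : ∫ x in Ioi (0:ℝ), (Real.exp (-(b * x ^ 2 / 2)) - 1) * x ^ (-a - 1)
      = ∫ x in Ioi (0:ℝ), (1 / 2 : ℝ) *
        ((|(2:ℝ)| * x ^ ((2:ℝ) - 1)) •
          ((Real.exp (-(b / 2 * x ^ (2:ℝ))) - 1) * (x ^ (2:ℝ)) ^ (-(a / 2) - 1))) := by
    refine setIntegral_congr_fun measurableSet_Ioi (fun x hx => ?_)
    have hx0 : (0:ℝ) < x := hx
    have hsq : x ^ (2:ℝ) = x ^ 2 := by
      rw [show (2:ℝ) = ((2:ℕ):ℝ) by norm_num, Real.rpow_natCast]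
    have h1 : (x ^ (2:ℝ)) ^ (-(a / 2) - 1) = x ^ (-a - 2) := by
      rw [← Real.rpow_mul hx0.le, show (2:ℝ) * (-(a / 2) - 1) = -a - 2 by ring]
    have h2 : x * x ^ (-a - 2) = x ^ (-a - 1) := by
      rw [show -a - 1 = 1 + (-a - 2) by ring, Real.rpow_add hx0, Real.rpow_one]
    rw [smul_eq_mul, h1, hsq, abs_of_pos (by norm_num : (0:ℝ) < 2),
      show (2:ℝ) - 1 = 1 by norm_num, Real.rpow_one,
      show b / 2 * x ^ 2 = b * x ^ 2 / 2 by ring]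
    rw [← h2]; ring
  rw [step1, integral_const_mul, key, Real.div_rpow hb.le (by norm_num : (0:ℝ) ≤ 2),
    show (-1 - a / 2 : ℝ) = -1 + -(a / 2) by ring, Real.rpow_add (by norm_num : (0:ℝ) < 2),
    Real.rpow_neg_one, Real.rpow_neg (by norm_num : (0:ℝ) ≤ 2)]
  ring

theorem rdts_kl_divergence_halfline (a l m : ℝ)
    (ha₀ : 0 < a) (ha₂ : a < 2) (ha₁ : a ≠ 1) (hl : 0 < l) (hm : 0 < m) :
    IntegrableOn
      (fun x : ℝ =>
        (exp (-(l * x ^ 2 / 2)) * (-((l - m) / 2) * x ^ 2 - 1) + exp (-(m * x ^ 2 / 2)))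
          * x ^ (-a - 1)) (Ioi 0) ∧
    ∫ x in Ioi (0:ℝ),
        (exp (-(l * x ^ 2 / 2)) * (-((l - m) / 2) * x ^ 2 - 1) + exp (-(m * x ^ 2 / 2)))
          * x ^ (-a - 1)
      = (2:ℝ) ^ (-1 - a / 2) * Gamma (-(a / 2)) *
          ((a / 2 - 1) * l ^ (a / 2) - (a / 2) * m * l ^ (a / 2 - 1) + m ^ (a / 2)) := by
  set fA : ℝ → ℝ := fun x => x ^ (1 - a) * Real.exp (-(l / 2) * x ^ 2) with hfA
  set fB : ℝ → ℝ := fun x => (Real.exp (-(m * x ^ 2 / 2)) - 1) * x ^ (-a - 1) with hfB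
  set fC : ℝ → ℝ := fun x => (Real.exp (-(l * x ^ 2 / 2)) - 1) * x ^ (-a - 1) with hfC
  have heq : ∀ x ∈ Ioi (0:ℝ),
      (Real.exp (-(l * x ^ 2 / 2)) * (-((l - m) / 2) * x ^ 2 - 1) + Real.exp (-(m * x ^ 2 / 2)))
        * x ^ (-a - 1)
      = -((l - m) / 2) * fA x + (fB x - fC x) := by
    intro x hx
    have hx0 : (0:ℝ) < x := hx
    have h1 : x ^ (1 - a) = x ^ 2 * x ^ (-a - 1) := by
      rw [show (1:ℝ) - a = ((2:ℕ):ℝ) + (-a - 1) by push_cast; ring, Real.rpow_add hx0,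
        Real.rpow_natCast]
    simp only [hfA, hfB, hfC, h1]
    rw [show -(l / 2) * x ^ 2 = -(l * x ^ 2 / 2) by ring]
    ring
  have hiA : IntegrableOn fA (Ioi 0) :=
    (integrable_rpow_mul_exp_neg_mul_sq (by positivity : (0:ℝ) < l / 2)
      (by linarith : (-1:ℝ) < 1 - a)).integrableOn
  have hiB : IntegrableOn fB (Ioi 0) := rdts_integrable_x a m ha₀ ha₂ hm
  have hiC : IntegrableOn fC (Ioi 0) := rdts_integrable_x a l ha₀ ha₂ hl
  have hint : IntegrableOn (fun x => -((l - m) / 2) * fA x + (fB x - fC x)) (Ioi 0) :=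
    (hiA.const_mul _).add (hiB.sub hiC)
  refine ⟨hint.congr_fun (fun x hx => (heq x hx).symm) measurableSet_Ioi, ?_⟩
  have hcong := setIntegral_congr_fun (μ := volume) measurableSet_Ioi heq
  have hsub : IntegrableOn (fun x => fB x - fC x) (Ioi 0) := hiB.sub hiC
  have hcm : IntegrableOn (fun x => -((l - m) / 2) * fA x) (Ioi 0) := hiA.const_mul _
  rw [hcong, integral_add hcm hsub, integral_sub hiB hiC, integral_const_mul]
  have hApow : ∫ x in Ioi (0:ℝ), fA x
      = ∫ x in Ioi (0:ℝ), x ^ (1 - a) * Real.exp (-(l / 2) * x ^ (2:ℝ)) := by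
    refine setIntegral_congr_fun measurableSet_Ioi (fun x hx => ?_)
    simp only [hfA]
    rw [show (2:ℝ) = ((2:ℕ):ℝ) by norm_num, Real.rpow_natCast]
  have hA := integral_rpow_mul_exp_neg_mul_rpow (p := (2:ℝ)) (q := 1 - a) (b := l / 2)
    two_pos (by linarith) (by positivity)
  rw [show (-(1 - a + 1) / 2 : ℝ) = a / 2 - 1 by ring,
    show ((1 - a + 1) / 2 : ℝ) = 1 - a / 2 by ring] at hA
  have hB := rdts_val_x a m ha₀ ha₂ hm
  have hC := rdts_val_x a l ha₀ ha₂ hl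
  have hg1 : Real.Gamma (1 - a / 2) = -(a / 2) * Real.Gamma (-(a / 2)) := by
    rw [show (1 - a / 2 : ℝ) = -(a / 2) + 1 by ring,
      Real.Gamma_add_one (by simp; linarith : -(a / 2) ≠ 0)]
  have hl2 : l * l ^ (a / 2 - 1) = l ^ (a / 2) := by
    nth_rewrite 1 [← Real.rpow_one l]
    rw [← Real.rpow_add hl]; norm_num
  have hld : (l / 2 : ℝ) ^ (a / 2 - 1) = l ^ (a / 2 - 1) * (4 * 2 ^ (-1 - a / 2)) := by
    rw [Real.div_rpow hl.le (by norm_num : (0:ℝ) ≤ 2), div_eq_mul_inv,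
      ← Real.rpow_neg (by norm_num : (0:ℝ) ≤ 2), show (-(a / 2 - 1) : ℝ) = 2 + (-1 - a / 2) by ring,
      Real.rpow_add (by norm_num : (0:ℝ) < 2),
      show ((2:ℝ) ^ (2:ℝ)) = 4 by
        rw [show (2:ℝ) = ((2:ℕ):ℝ) by norm_num]; rw [Real.rpow_natCast]; norm_num]
  rw [hApow, hA, hB, hC, hg1, ← hl2, hld]
  ring
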